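/- (Convergence of PA-I.) Let N ≥ 1 be an integer, u⁰ ∈ ℝ^m, and define the fine solution by U(T_0) = u⁰ and U(T_{n+1}) = P_{J_1}·U(T_n) for 0 ≤ n ≤ N−1. Let (U_n^k)_{0≤n≤N, k≥0} satisfy U_0^k = u⁰ for all k and U_{n+1}^{k+1} = P_1·U_n^{k+1} + (P_{J_1} − P_1)·U_n^k for 0 ≤ n ≤ N−1 and k ≥ 0. Set E_n^k = U(T_n) − U_n^k, α = ‖P_{J_1} − P_1‖ and β = ‖P_1‖ (so β < 1). Then for every k ≥ 0, max_{1≤j≤N} ‖E_j^{k+1}‖ ≤ α^{k+1} · min{ ((1 − β^{N−1})/(1 − β))^{k+1} , C(N−1, k+1) } · max_{1≤j≤N} ‖E_j^0‖, where C(·,·) denotes the binomial coefficient. -/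

import Mathlib

/-- The m×m discrete Dirichlet Laplacian with mesh size `h`. -/
noncomputable def Dh (m : ℕ) (h : ℝ) : Matrix (Fin m) (Fin m) ℝ :=
  Matrix.of fun i j =>
    if (i : ℕ) = (j : ℕ) then 1 / h ^ 2 * (-2)
    else if (i : ℕ) + 1 = (j : ℕ) ∨ (j : ℕ) + 1 = (i : ℕ) then 1 / h ^ 2 * 1
    else 0

/-- `Pmat m h ΔT ε i = (I − iΔT·D_h + ε²ΔT·D_h²)⁻¹ (I − iΔT·D_h)`. -/
noncomputable def Pmat (m : ℕ) (h ΔT ε : ℝ) (i : ℕ) : Matrix (Fin m) (Fin m) ℝ :=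
  ((1 : Matrix (Fin m) (Fin m) ℝ) - ((i : ℝ) * ΔT) • Dh m h
      + (ε ^ 2 * ΔT) • Dh m h ^ 2)⁻¹
    * ((1 : Matrix (Fin m) (Fin m) ℝ) - ((i : ℝ) * ΔT) • Dh m h)

/-- `PJmat m h ΔT ε J i = [(I − (iΔT/J)·D_h + ε²(ΔT/J)·D_h²)⁻¹ (I − (iΔT/J)·D_h)]^J`. -/
noncomputable def PJmat (m : ℕ) (h ΔT ε : ℝ) (J i : ℕ) : Matrix (Fin m) (Fin m) ℝ :=
  (((1 : Matrix (Fin m) (Fin m) ℝ) - ((i : ℝ) * ΔT / (J : ℝ)) • Dh m h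
      + (ε ^ 2 * (ΔT / (J : ℝ))) • Dh m h ^ 2)⁻¹
    * ((1 : Matrix (Fin m) (Fin m) ℝ) - ((i : ℝ) * ΔT / (J : ℝ)) • Dh m h)) ^ J

/-- The action of a matrix on `EuclideanSpace ℝ (Fin m)` (i.e. `ℝ^m` with the
Euclidean norm), given by matrix-vector multiplication. -/
noncomputable def act {m : ℕ} (A : Matrix (Fin m) (Fin m) ℝ)
    (U : EuclideanSpace ℝ (Fin m)) : EuclideanSpace ℝ (Fin m) :=
  Matrix.toEuclideanCLM (𝕜 := ℝ) A U

/-- The operator (spectral) norm of a matrix, induced by the Euclidean norm. -/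
noncomputable def opNorm {m : ℕ} (A : Matrix (Fin m) (Fin m) ℝ) : ℝ :=
  ‖Matrix.toEuclideanCLM (𝕜 := ℝ) A‖

open Finset

noncomputable def extZ {m : ℕ} (x : EuclideanSpace ℝ (Fin m)) : ℕ → ℝ :=
  fun i => if hi : i < m then x ⟨i, hi⟩ else 0

lemma extZ_apply {m : ℕ} (x : EuclideanSpace ℝ (Fin m)) (i : Fin m) :
    extZ x (i : ℕ) = x i := by
  simp [extZ]

lemma extZ_zero {m : ℕ} (x : EuclideanSpace ℝ (Fin m)) {i : ℕ} (hi : m ≤ i) :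
    extZ x i = 0 := by
  simp [extZ, Nat.not_lt.mpr hi]

lemma dh_entry (m : ℕ) (h : ℝ) (i j : Fin m) :
    Dh m h i j
    = 1 / h ^ 2 * ((if (i:ℕ) = (j:ℕ) then (-2:ℝ) else 0)
        + (if (i:ℕ) + 1 = (j:ℕ) then 1 else 0) + (if (j:ℕ) + 1 = (i:ℕ) then 1 else 0)) := by
  simp only [Dh, Matrix.of_apply]
  rcases Nat.lt_trichotomy (i:ℕ) (j:ℕ) with hij | hij | hij
  · have h1 : (i:ℕ) ≠ (j:ℕ) := by omega
    have h2 : ¬ ((j:ℕ) + 1 = (i:ℕ)) := by omega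
    by_cases h3 : (i:ℕ)+1 = (j:ℕ) <;> simp [h1, h2, h3] <;> ring
  · simp [hij, (by omega : ¬ ((j:ℕ) + 1 = (j:ℕ)))]
  · have h1 : (i:ℕ) ≠ (j:ℕ) := by omega
    have h2 : ¬ ((i:ℕ) + 1 = (j:ℕ)) := by omega
    by_cases h3 : (j:ℕ)+1 = (i:ℕ) <;> simp [h1, h2, h3] <;> ring

open Finset in
lemma dh_quad (m : ℕ) (h : ℝ) (x : EuclideanSpace ℝ (Fin m)) :
    inner (𝕜 := ℝ) (act (Dh m h) x) x
      = 1 / h ^ 2 * (2 * ∑ i ∈ range m, extZ x i * extZ x (i+1)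
          - 2 * ∑ i ∈ range m, (extZ x i)^2) := by
  set y := extZ x with hy
  have step0 : inner (𝕜 := ℝ) (act (Dh m h) x) x
      = ∑ i : Fin m, (∑ j : Fin m, Dh m h i j * x j) * x i := by
    simp only [PiLp.inner_apply, RCLike.inner_apply, conj_trivial]
    exact Finset.sum_congr rfl fun i _ => mul_comm _ _
  rw [step0]
  have step1 : ∀ i j : Fin m, Dh m h i j * x j * x i
      = (if (i:ℕ) = (j:ℕ) then 1/h^2 * (-2) * (y (j:ℕ) * y (i:ℕ)) else 0)
        + (if (i:ℕ) + 1 = (j:ℕ) then 1/h^2 * (y (j:ℕ) * y (i:ℕ)) else 0)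
        + (if (j:ℕ) + 1 = (i:ℕ) then 1/h^2 * (y (j:ℕ) * y (i:ℕ)) else 0) := by
    intro i j
    rw [dh_entry, ← extZ_apply x i, ← extZ_apply x j, ← hy]
    by_cases h1 : (i:ℕ) = (j:ℕ) <;> by_cases h2 : (i:ℕ)+1 = (j:ℕ) <;>
      by_cases h3 : (j:ℕ)+1 = (i:ℕ) <;> simp [h1, h2, h3] <;> ring
  calc ∑ i : Fin m, (∑ j : Fin m, Dh m h i j * x j) * x i
      = ∑ i : Fin m, ∑ j : Fin m,
          ((if (i:ℕ) = (j:ℕ) then 1/h^2 * (-2) * (y (j:ℕ) * y (i:ℕ)) else 0)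
          + (if (i:ℕ) + 1 = (j:ℕ) then 1/h^2 * (y (j:ℕ) * y (i:ℕ)) else 0)
          + (if (j:ℕ) + 1 = (i:ℕ) then 1/h^2 * (y (j:ℕ) * y (i:ℕ)) else 0)) := by
        refine Finset.sum_congr rfl fun i _ => ?_
        rw [Finset.sum_mul]
        exact Finset.sum_congr rfl fun j _ => step1 i j
    _ = ∑ i ∈ range m, ∑ j ∈ range m,
          ((if i = j then 1/h^2 * (-2) * (y j * y i) else 0)
          + (if i + 1 = j then 1/h^2 * (y j * y i) else 0)
          + (if j + 1 = i then 1/h^2 * (y j * y i) else 0)) := by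
        rw [← Fin.sum_univ_eq_sum_range (fun i => ∑ j ∈ range m,
          ((if i = j then 1/h^2 * (-2) * (y j * y i) else 0)
          + (if i + 1 = j then 1/h^2 * (y j * y i) else 0)
          + (if j + 1 = i then 1/h^2 * (y j * y i) else 0))) m]
        refine Finset.sum_congr rfl fun i _ => ?_
        exact Fin.sum_univ_eq_sum_range (fun j =>
          ((if (i:ℕ) = j then 1/h^2 * (-2) * (y j * y (i:ℕ)) else 0)
          + (if (i:ℕ) + 1 = j then 1/h^2 * (y j * y (i:ℕ)) else 0)
          + (if j + 1 = (i:ℕ) then 1/h^2 * (y j * y (i:ℕ)) else 0))) m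
    _ = 1 / h ^ 2 * (2 * ∑ i ∈ range m, y i * y (i+1)
          - 2 * ∑ i ∈ range m, (y i)^2) := by
        simp only [Finset.sum_add_distrib]
        have T1 : ∑ i ∈ range m, ∑ j ∈ range m,
            (if i = j then 1/h^2 * (-2) * (y j * y i) else 0)
            = ∑ i ∈ range m, 1/h^2 * (-2) * (y i * y i) := by
          refine Finset.sum_congr rfl fun i hi => ?_
          rw [Finset.sum_ite_eq (range m) i (fun j => 1/h^2 * (-2) * (y j * y i))]
          simp [hi]
        have T2 : ∑ i ∈ range m, ∑ j ∈ range m,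
            (if i + 1 = j then 1/h^2 * (y j * y i) else 0)
            = ∑ i ∈ range m, 1/h^2 * (y (i+1) * y i) := by
          refine Finset.sum_congr rfl fun i hi => ?_
          rw [Finset.sum_ite_eq (range m) (i+1) (fun j => 1/h^2 * (y j * y i))]
          by_cases hi1 : i + 1 ∈ range m
          · simp [hi1]
          · have : y (i+1) = 0 := extZ_zero x (by simpa using hi1)
            simp [hi1, this]
        have T3 : ∑ i ∈ range m, ∑ j ∈ range m,
            (if j + 1 = i then 1/h^2 * (y j * y i) else 0)
            = ∑ j ∈ range m, 1/h^2 * (y j * y (j+1)) := by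
          rw [Finset.sum_comm]
          refine Finset.sum_congr rfl fun j hj => ?_
          rw [Finset.sum_ite_eq (range m) (j+1) (fun i => 1/h^2 * (y j * y i))]
          by_cases hj1 : j + 1 ∈ range m
          · simp [hj1]
          · have : y (j+1) = 0 := extZ_zero x (by simpa using hj1)
            simp [hj1, this]
        rw [T1, T2, T3]
        simp only [Finset.mul_sum]
        rw [mul_sub, Finset.mul_sum, Finset.mul_sum, ← Finset.sum_sub_distrib]
        rw [← Finset.sum_add_distrib, ← Finset.sum_add_distrib]
        exact Finset.sum_congr rfl fun i _ => by ring

open Finset in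
lemma dh_quad' (m : ℕ) {h : ℝ} (hh : 0 < h) (x : EuclideanSpace ℝ (Fin m)) :
    inner (𝕜 := ℝ) (act (Dh m h) x) x
      = -(1 / h ^ 2) * ((extZ x 0)^2 + ∑ i ∈ range m, (extZ x i - extZ x (i+1))^2) := by
  rw [dh_quad]
  set y := extZ x with hy
  have hA : ∑ i ∈ range m, (y (i+1))^2 = ∑ i ∈ range m, (y i)^2 + (y m)^2 - (y 0)^2 := by
    have h1 := Finset.sum_range_succ (fun i => (y i)^2) m
    have h2 := Finset.sum_range_succ' (fun i => (y i)^2) m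
    linarith [h1.symm.trans h2]
  have hB : ∑ i ∈ range m, (y i - y (i+1))^2
      = ∑ i ∈ range m, (y i)^2 - 2 * ∑ i ∈ range m, (y i * y (i+1))
        + ∑ i ∈ range m, (y (i+1))^2 := by
    have : ∀ i ∈ range m, (y i - y (i+1))^2
        = (y i)^2 - 2 * (y i * y (i+1)) + (y (i+1))^2 := fun i _ => by ring
    rw [Finset.sum_congr rfl this, Finset.sum_add_distrib, Finset.sum_sub_distrib,
      ← Finset.mul_sum]
  have hym : y m = 0 := extZ_zero x le_rfl
  rw [hym] at hA
  have : 2 * ∑ i ∈ range m, y i * y (i+1) - 2 * ∑ i ∈ range m, (y i)^2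
      = -((y 0)^2 + ∑ i ∈ range m, (y i - y (i+1))^2) := by
    rw [hB, hA]; ring
  rw [this]; ring

lemma dh_semidef (m : ℕ) {h : ℝ} (hh : 0 < h) (x : EuclideanSpace ℝ (Fin m)) :
    inner (𝕜 := ℝ) (act (Dh m h) x) x ≤ 0 := by
  rw [dh_quad' m hh x]
  have h1 : 0 ≤ (extZ x 0)^2 + ∑ i ∈ Finset.range m, (extZ x i - extZ x (i+1))^2 :=
    add_nonneg (sq_nonneg _) (Finset.sum_nonneg fun i _ => sq_nonneg _)
  have h2 : 0 ≤ 1 / h ^ 2 := by positivity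
  nlinarith

lemma dh_inj (m : ℕ) {h : ℝ} (hh : 0 < h) {x : EuclideanSpace ℝ (Fin m)}
    (h0 : act (Dh m h) x = 0) : x = 0 := by
  have hq : inner (𝕜 := ℝ) (act (Dh m h) x) x = 0 := by rw [h0]; simp
  rw [dh_quad' m hh x] at hq
  have hpos : (0:ℝ) < 1 / h ^ 2 := by positivity
  have hsum : (extZ x 0)^2 + ∑ i ∈ Finset.range m, (extZ x i - extZ x (i+1))^2 = 0 := by
    by_contra hne
    have h1 : 0 ≤ (extZ x 0)^2 + ∑ i ∈ Finset.range m, (extZ x i - extZ x (i+1))^2 :=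
      add_nonneg (sq_nonneg _) (Finset.sum_nonneg fun i _ => sq_nonneg _)
    have : (0:ℝ) < (extZ x 0)^2 + ∑ i ∈ Finset.range m, (extZ x i - extZ x (i+1))^2 :=
      lt_of_le_of_ne h1 (Ne.symm hne)
    nlinarith
  have hs0 : ∑ i ∈ Finset.range m, (extZ x i - extZ x (i+1))^2 = 0 ∧ (extZ x 0)^2 = 0 := by
    constructor <;> nlinarith [sq_nonneg (extZ x 0),
      Finset.sum_nonneg (fun i (_ : i ∈ Finset.range m) => sq_nonneg (extZ x i - extZ x (i+1)))]
  have h00 : extZ x 0 = 0 := by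
    have := hs0.2; nlinarith
  have hdiff : ∀ i ∈ Finset.range m, (extZ x i - extZ x (i+1))^2 = 0 := by
    intro i hi
    have := (Finset.sum_eq_zero_iff_of_nonneg (fun j _ => sq_nonneg _)).mp hs0.1 i hi
    exact this
  have hall : ∀ i, extZ x i = 0 := by
    intro i
    induction i with
    | zero => exact h00
    | succ n ih =>
      by_cases hn : n + 1 < m
      · have hd := hdiff n (Finset.mem_range.mpr (by omega))
        have : extZ x n - extZ x (n+1) = 0 := by nlinarith [sq_nonneg (extZ x n - extZ x (n+1))]
        have ihn := ih
        linarith [this, ihn]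
      · exact extZ_zero x (by omega)
  ext i
  have := hall (i : ℕ)
  rwa [extZ_apply] at this

lemma dh_symm_entry (m : ℕ) (h : ℝ) (i j : Fin m) : Dh m h i j = Dh m h j i := by
  rw [dh_entry, dh_entry]
  by_cases h1 : (i:ℕ) = (j:ℕ) <;> by_cases h2 : (i:ℕ)+1 = (j:ℕ) <;>
    by_cases h3 : (j:ℕ)+1 = (i:ℕ) <;> simp [h1, h2, h3, eq_comm] <;> ring

lemma dh_symm (m : ℕ) (h : ℝ) (u v : EuclideanSpace ℝ (Fin m)) :
    inner (𝕜 := ℝ) (act (Dh m h) u) v = inner (𝕜 := ℝ) u (act (Dh m h) v) := by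
  have s1 : inner (𝕜 := ℝ) (act (Dh m h) u) v
      = ∑ i : Fin m, (∑ j : Fin m, Dh m h i j * u j) * v i := by
    simp only [PiLp.inner_apply, RCLike.inner_apply, conj_trivial]; exact Finset.sum_congr rfl fun i _ => mul_comm _ _
  have s2 : inner (𝕜 := ℝ) u (act (Dh m h) v)
      = ∑ i : Fin m, u i * (∑ j : Fin m, Dh m h i j * v j) := by
    simp only [PiLp.inner_apply, RCLike.inner_apply, conj_trivial]; exact Finset.sum_congr rfl fun i _ => mul_comm _ _
  rw [s1, s2]
  have l1 : ∀ i : Fin m, (∑ j : Fin m, Dh m h i j * u j) * v i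
      = ∑ j : Fin m, Dh m h i j * u j * v i := fun i => Finset.sum_mul _ _ _
  have l2 : ∀ i : Fin m, u i * (∑ j : Fin m, Dh m h i j * v j)
      = ∑ j : Fin m, u i * (Dh m h i j * v j) := fun i => Finset.mul_sum _ _ _
  rw [Finset.sum_congr rfl fun i _ => l1 i, Finset.sum_congr rfl fun i _ => l2 i,
    Finset.sum_comm]
  refine Finset.sum_congr rfl fun j _ => Finset.sum_congr rfl fun i _ => ?_
  rw [dh_symm_entry m h i j]; ring

lemma act_mul {m : ℕ} (A B : Matrix (Fin m) (Fin m) ℝ) (u : EuclideanSpace ℝ (Fin m)) :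
    act (A * B) u = act A (act B u) := by
  simp only [act, map_mul]; rfl

lemma act_one {m : ℕ} (u : EuclideanSpace ℝ (Fin m)) :
    act (1 : Matrix (Fin m) (Fin m) ℝ) u = u := by
  simp only [act, map_one]; rfl

lemma act_add {m : ℕ} (A B : Matrix (Fin m) (Fin m) ℝ) (u : EuclideanSpace ℝ (Fin m)) :
    act (A + B) u = act A u + act B u := by
  simp only [act, map_add]; rfl

lemma act_sub {m : ℕ} (A B : Matrix (Fin m) (Fin m) ℝ) (u : EuclideanSpace ℝ (Fin m)) :
    act (A - B) u = act A u - act B u := by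
  simp only [act, map_sub]; rfl

lemma act_smul {m : ℕ} (c : ℝ) (A : Matrix (Fin m) (Fin m) ℝ) (u : EuclideanSpace ℝ (Fin m)) :
    act (c • A) u = c • act A u := by
  simp only [act, map_smul]; rfl

lemma act_linear {m : ℕ} (A : Matrix (Fin m) (Fin m) ℝ) (u v : EuclideanSpace ℝ (Fin m)) :
    act A (u - v) = act A u - act A v :=
  map_sub (Matrix.toEuclideanCLM (𝕜 := ℝ) A) u v

section contraction

variable {m : ℕ} {h t c : ℝ}

lemma norm_A_lt_norm_B (hh : 0 < h) (ht : 0 < t) (hc : 0 < c)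
    {y : EuclideanSpace ℝ (Fin m)} (hy : y ≠ 0) :
    ‖act ((1 : Matrix (Fin m) (Fin m) ℝ) - t • Dh m h) y‖
      < ‖act ((1 : Matrix (Fin m) (Fin m) ℝ) - t • Dh m h + c • Dh m h ^ 2) y‖ := by
  set D := Dh m h with hD
  set v := act D y with hv
  have hvne : v ≠ 0 := fun h0 => hy (dh_inj m hh h0)
  set a := act ((1 : Matrix (Fin m) (Fin m) ℝ) - t • D) y with ha
  have hBy : act ((1 : Matrix (Fin m) (Fin m) ℝ) - t • D + c • D ^ 2) y
      = a + c • act D v := by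
    rw [act_add, act_smul, sq, act_mul]
  have hay : a = y - t • v := by
    rw [ha, act_sub, act_one, act_smul]
  have hinner : inner (𝕜 := ℝ) a (act D v) ≥ ‖v‖^2 := by
    rw [hay, inner_sub_left, real_inner_smul_left]
    have e1 : inner (𝕜 := ℝ) y (act D v) = ‖v‖^2 := by
      rw [← dh_symm m h y v, ← hv, real_inner_self_eq_norm_sq]
    have e2 : inner (𝕜 := ℝ) v (act D v) ≤ 0 := by
      rw [real_inner_comm]
      exact dh_semidef m hh v
    rw [e1]
    nlinarith
  have hsq : ‖a‖^2 + 2 * c * ‖v‖^2 ≤ ‖a + c • act D v‖^2 := by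
    rw [norm_add_sq_real]
    have : inner (𝕜 := ℝ) a (c • act D v) = c * inner (𝕜 := ℝ) a (act D v) :=
      real_inner_smul_right _ _ _
    nlinarith [sq_nonneg ‖c • act D v‖]
  have hvn : 0 < ‖v‖ := norm_pos_iff.mpr hvne
  have hvpos : 0 < ‖v‖^2 := by positivity
  rw [hBy]
  nlinarith [norm_nonneg a, norm_nonneg (a + c • act D v)]

lemma B_isUnit (hh : 0 < h) (ht : 0 < t) (hc : 0 < c) :
    IsUnit ((1 : Matrix (Fin m) (Fin m) ℝ) - t • Dh m h + c • Dh m h ^ 2) := by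
  set B := (1 : Matrix (Fin m) (Fin m) ℝ) - t • Dh m h + c • Dh m h ^ 2 with hB
  have hinj : ∀ y : EuclideanSpace ℝ (Fin m), act B y = 0 → y = 0 := by
    intro y h0
    by_contra hy
    have := norm_A_lt_norm_B hh ht hc hy
    rw [← hB, h0] at this
    simp only [norm_zero] at this
    exact absurd this (not_lt.mpr (norm_nonneg _))
  rw [← Matrix.mulVec_injective_iff_isUnit]
  intro z1 z2 hz
  have e : ∀ z : Fin m → ℝ, act B ((WithLp.equiv 2 _).symm z) = (WithLp.equiv 2 _).symm (B.mulVec z) := by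
    intro z
    show Matrix.toEuclideanCLM (𝕜 := ℝ) B ((WithLp.equiv 2 _).symm z) = _
    rfl
  have h12 : act B ((WithLp.equiv 2 _).symm z1) = act B ((WithLp.equiv 2 _).symm z2) := by
    rw [e, e, hz]
  have : act B ((WithLp.equiv 2 _).symm z1 - (WithLp.equiv 2 _).symm z2) = 0 := by
    rw [act_linear, h12, sub_self]
  have := hinj _ this
  have : (WithLp.equiv 2 _).symm z1 = (WithLp.equiv 2 _).symm z2 := by
    rwa [sub_eq_zero] at this
  exact (WithLp.equiv 2 _).symm.injective this

end contraction

section contraction2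

variable {m : ℕ} {h t c : ℝ}

lemma AB_comm (m : ℕ) (h t c : ℝ) :
    ((1 : Matrix (Fin m) (Fin m) ℝ) - t • Dh m h)
      * ((1 : Matrix (Fin m) (Fin m) ℝ) - t • Dh m h + c • Dh m h ^ 2)
    = ((1 : Matrix (Fin m) (Fin m) ℝ) - t • Dh m h + c • Dh m h ^ 2)
      * ((1 : Matrix (Fin m) (Fin m) ℝ) - t • Dh m h) := by
  set D := Dh m h
  simp only [mul_add, add_mul, mul_sub, sub_mul, one_mul, mul_one,
    Matrix.smul_mul, Matrix.mul_smul, sq]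
  noncomm_ring
  rw [smul_comm c t (Dh m h * (Dh m h * Dh m h))]

lemma P_contraction (hh : 0 < h) (ht : 0 < t) (hc : 0 < c)
    {x : EuclideanSpace ℝ (Fin m)} (hx : x ≠ 0) :
    ‖act (((1 : Matrix (Fin m) (Fin m) ℝ) - t • Dh m h + c • Dh m h ^ 2)⁻¹
        * ((1 : Matrix (Fin m) (Fin m) ℝ) - t • Dh m h)) x‖ < ‖x‖ := by
  set A := (1 : Matrix (Fin m) (Fin m) ℝ) - t • Dh m h with hA
  set B := (1 : Matrix (Fin m) (Fin m) ℝ) - t • Dh m h + c • Dh m h ^ 2 with hB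
  have hU : IsUnit B := B_isUnit hh ht hc
  have hdet : IsUnit B.det := (Matrix.isUnit_iff_isUnit_det B).mp hU
  have hBB : B * B⁻¹ = 1 := Matrix.mul_nonsing_inv B hdet
  have hBB' : B⁻¹ * B = 1 := Matrix.nonsing_inv_mul B hdet
  have hcomm : B⁻¹ * A = A * B⁻¹ := by
    calc B⁻¹ * A = B⁻¹ * A * (B * B⁻¹) := by rw [hBB, mul_one]
      _ = B⁻¹ * (A * B) * B⁻¹ := by rw [← mul_assoc, ← mul_assoc]
      _ = B⁻¹ * (B * A) * B⁻¹ := by rw [AB_comm]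
      _ = (B⁻¹ * B) * A * B⁻¹ := by rw [← mul_assoc]
      _ = A * B⁻¹ := by rw [hBB', one_mul]
  set y := act B⁻¹ x with hy
  have hBy : act B y = x := by
    rw [hy, ← act_mul, hBB, act_one]
  have hyne : y ≠ 0 := by
    intro h0
    rw [h0] at hBy
    have : act B (0 : EuclideanSpace ℝ (Fin m)) = 0 :=
      map_zero (Matrix.toEuclideanCLM (𝕜 := ℝ) B)
    rw [this] at hBy
    exact hx hBy.symm
  have : act (B⁻¹ * A) x = act A y := by
    rw [hcomm, act_mul]
  rw [this, ← hBy]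
  exact norm_A_lt_norm_B hh ht hc hyne

lemma opnorm_lt_one (hm : 1 ≤ m) (T : EuclideanSpace ℝ (Fin m) →L[ℝ] EuclideanSpace ℝ (Fin m))
    (hT : ∀ x : EuclideanSpace ℝ (Fin m), x ≠ 0 → ‖T x‖ < ‖x‖) : ‖T‖ < 1 := by
  haveI : Nontrivial (EuclideanSpace ℝ (Fin m)) := by
    refine ⟨EuclideanSpace.single ⟨0, hm⟩ (1:ℝ), 0, ?_⟩
    intro hcontra
    have := congrFun (congrArg (fun z : EuclideanSpace ℝ (Fin m) => (z : Fin m → ℝ)) hcontra) ⟨0, hm⟩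
    simp [EuclideanSpace.single_apply] at this
  have hsph : (Metric.sphere (0 : EuclideanSpace ℝ (Fin m)) 1).Nonempty :=
    NormedSpace.sphere_nonempty.mpr zero_le_one
  have hcpt : IsCompact (Metric.sphere (0 : EuclideanSpace ℝ (Fin m)) 1) :=
    isCompact_sphere 0 1
  have hcont : ContinuousOn (fun z => ‖T z‖) (Metric.sphere (0 : EuclideanSpace ℝ (Fin m)) 1) :=
    (T.continuous.norm).continuousOn
  obtain ⟨x0, hx0mem, hmax⟩ := hcpt.exists_isMaxOn hsph hcont
  have hx0norm : ‖x0‖ = 1 := by simpa using hx0mem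
  have hx0ne : x0 ≠ 0 := by
    intro h0; rw [h0, norm_zero] at hx0norm; exact one_ne_zero hx0norm.symm
  set cmax := ‖T x0‖ with hcm
  have hclt : cmax < 1 := by
    have := hT x0 hx0ne
    rwa [hx0norm] at this
  have hbound : ‖T‖ ≤ cmax := by
    refine T.opNorm_le_bound (norm_nonneg _) fun z => ?_
    by_cases hz : z = 0
    · simp [hz]
    · have hzn : 0 < ‖z‖ := norm_pos_iff.mpr hz
      have hmem : (‖z‖⁻¹ • z) ∈ Metric.sphere (0 : EuclideanSpace ℝ (Fin m)) 1 := by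
        simp [norm_smul, abs_of_pos (inv_pos.mpr hzn), inv_mul_cancel₀ (ne_of_gt hzn)]
      have hle : ‖T (‖z‖⁻¹ • z)‖ ≤ cmax := hmax hmem
      rw [map_smul, norm_smul] at hle
      have : ‖(‖z‖⁻¹ : ℝ)‖ = ‖z‖⁻¹ := by
        rw [Real.norm_eq_abs, abs_of_pos (inv_pos.mpr hzn)]
      rw [this] at hle
      calc ‖T z‖ = ‖z‖ * (‖z‖⁻¹ * ‖T z‖) := by field_simp
        _ ≤ ‖z‖ * cmax := by
            apply mul_le_mul_of_nonneg_left _ (le_of_lt hzn)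
            exact hle
        _ = cmax * ‖z‖ := mul_comm _ _
  exact lt_of_le_of_lt hbound hclt

end contraction2

lemma act_norm_le {m : ℕ} (A : Matrix (Fin m) (Fin m) ℝ) (x : EuclideanSpace ℝ (Fin m)) :
    ‖act A x‖ ≤ opNorm A * ‖x‖ :=
  (Matrix.toEuclideanCLM (𝕜 := ℝ) A).le_opNorm x

lemma pmat_opnorm_lt_one {m : ℕ} {h ΔT ε : ℝ} (hh : 0 < h) (hΔT : 0 < ΔT) (hε : 0 < ε)
    (hm : 1 ≤ m) : opNorm (Pmat m h ΔT ε 1) < 1 := by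
  apply opnorm_lt_one hm
  intro x hx
  have ht : (0:ℝ) < ((1:ℕ) : ℝ) * ΔT := by simp [hΔT]
  have hc : (0:ℝ) < ε ^ 2 * ΔT := by positivity
  exact P_contraction hh ht hc hx

lemma opNorm_nonneg {m : ℕ} (A : Matrix (Fin m) (Fin m) ℝ) : 0 ≤ opNorm A :=
  norm_nonneg _


theorem stmt10 (h ΔT ε : ℝ) (hh : 0 < h) (hΔT : 0 < ΔT) (hε : 0 < ε)
    (m : ℕ) (hm : 1 ≤ m) (J : ℕ) (hJ : 2 ≤ J)
    (N : ℕ) (hN : 1 ≤ N)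
    (u0 : EuclideanSpace ℝ (Fin m))
    (Uf : ℕ → EuclideanSpace ℝ (Fin m)) (U : ℕ → ℕ → EuclideanSpace ℝ (Fin m))
    (hUf0 : Uf 0 = u0)
    (hUfrec : ∀ n < N, Uf (n + 1) = act (PJmat m h ΔT ε J 1) (Uf n))
    (h0 : ∀ k, U 0 k = u0)
    (hrec : ∀ n < N, ∀ k, U (n + 1) (k + 1) =
      act (Pmat m h ΔT ε 1) (U n (k + 1))
        + act (PJmat m h ΔT ε J 1 - Pmat m h ΔT ε 1) (U n k)) :
    ∀ k : ℕ,
      ((Finset.Icc 1 N).sup' (Finset.nonempty_Icc.mpr hN)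
          fun j => ‖Uf j - U j (k + 1)‖) ≤
        opNorm (PJmat m h ΔT ε J 1 - Pmat m h ΔT ε 1) ^ (k + 1) *
          min (((1 - opNorm (Pmat m h ΔT ε 1) ^ (N - 1)) /
                  (1 - opNorm (Pmat m h ΔT ε 1))) ^ (k + 1))
              ((N - 1).choose (k + 1) : ℝ) *
          ((Finset.Icc 1 N).sup' (Finset.nonempty_Icc.mpr hN)
            fun j => ‖Uf j - U j 0‖) := by
  set P1 := Pmat m h ΔT ε 1 with hP1
  set PJ := PJmat m h ΔT ε J 1 with hPJ
  set α := opNorm (PJ - P1) with hαdef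
  set β := opNorm P1 with hβdef
  have hα : 0 ≤ α := opNorm_nonneg _
  have hβ0 : 0 ≤ β := opNorm_nonneg _
  have hβ1 : β < 1 := pmat_opnorm_lt_one hh hΔT hε hm
  -- errors
  have hE0 : ∀ k, Uf 0 - U 0 k = 0 := by
    intro k; rw [hUf0, h0, sub_self]
  have hErec : ∀ n, n < N → ∀ k, Uf (n+1) - U (n+1) (k+1)
      = act P1 (Uf n - U n (k+1)) + act (PJ - P1) (Uf n - U n k) := by
    intro n hn k
    rw [hUfrec n hn, hrec n hn k, act_linear, act_linear, act_sub, act_sub]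
    abel
  have hbound : ∀ n, n < N → ∀ k, ‖Uf (n+1) - U (n+1) (k+1)‖
      ≤ β * ‖Uf n - U n (k+1)‖ + α * ‖Uf n - U n k‖ := by
    intro n hn k
    rw [hErec n hn k]
    refine le_trans (norm_add_le _ _) (add_le_add ?_ ?_)
    · exact act_norm_le _ _
    · exact act_norm_le _ _
  set M : ℕ → ℝ := fun k => (Finset.Icc 1 N).sup' (Finset.nonempty_Icc.mpr hN)
    (fun j => ‖Uf j - U j k‖) with hMdef
  have hNmem : N ∈ Finset.Icc 1 N := Finset.mem_Icc.mpr ⟨hN, le_rfl⟩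
  have hM0 : ∀ k, 0 ≤ M k := fun k =>
    le_trans (norm_nonneg _) (Finset.le_sup' (fun j => ‖Uf j - U j k‖) hNmem)
  have hMle : ∀ k j, 1 ≤ j → j ≤ N → ‖Uf j - U j k‖ ≤ M k := fun k j h1 h2 =>
    Finset.le_sup' (fun j => ‖Uf j - U j k‖) (Finset.mem_Icc.mpr ⟨h1, h2⟩)
  have hEM : ∀ k n, n ≤ N → ‖Uf n - U n k‖ ≤ M k := by
    intro k n hn
    rcases Nat.eq_zero_or_pos n with rfl | hpos
    · rw [hE0 k, norm_zero]; exact hM0 k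
    · exact hMle k n hpos hn
  have hMsup : ∀ k (c : ℝ), (∀ j, 1 ≤ j → j ≤ N → ‖Uf j - U j k‖ ≤ c) → M k ≤ c := by
    intro k c hc
    exact Finset.sup'_le _ _ fun j hj => hc j (Finset.mem_Icc.mp hj).1 (Finset.mem_Icc.mp hj).2
  have hE1 : ∀ k, Uf 1 - U 1 (k+1) = 0 := by
    intro k
    rw [hErec 0 (by omega) k, hE0, hE0]
    rw [show act P1 (0 : EuclideanSpace ℝ (Fin m)) = 0 from
      map_zero (Matrix.toEuclideanCLM (𝕜 := ℝ) P1)]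
    rw [show act (PJ - P1) (0 : EuclideanSpace ℝ (Fin m)) = 0 from
      map_zero (Matrix.toEuclideanCLM (𝕜 := ℝ) (PJ - P1))]
    rw [add_zero]
  -- geometric bound
  have geom : ∀ k n, n ≤ N → ‖Uf n - U n (k+1)‖
      ≤ α * (∑ i ∈ range (n-1), β^i) * M k := by
    intro k n
    induction n with
    | zero =>
      intro _
      rw [hE0, norm_zero]
      exact mul_nonneg (mul_nonneg hα (Finset.sum_nonneg fun i _ => pow_nonneg hβ0 i)) (hM0 k)
    | succ n ih =>
      intro hn
      have hnN : n < N := hn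
      rcases Nat.eq_zero_or_pos n with rfl | hpos
      · rw [hE1 k, norm_zero]
        have : (0:ℝ) ≤ α * (∑ i ∈ range (1-1), β^i) * M k := by
          apply mul_nonneg (mul_nonneg hα (Finset.sum_nonneg fun i _ => pow_nonneg hβ0 i)) (hM0 k)
        exact this
      · have ih' := ih (le_of_lt hnN)
        have h2 := hEM k n (le_of_lt hnN)
        have hb := hbound n hnN k
        have hSrw : (∑ i ∈ range ((n+1)-1), β^i) = β * (∑ i ∈ range (n-1), β^i) + 1 := by
          have hn1 : (n+1) - 1 = (n-1) + 1 := by omega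
          rw [hn1, geom_sum_succ]
        rw [hSrw]
        have hS : 0 ≤ ∑ i ∈ range (n-1), β^i :=
          Finset.sum_nonneg fun i _ => pow_nonneg hβ0 i
        nlinarith [hM0 k, norm_nonneg (Uf n - U n (k+1)), norm_nonneg (Uf n - U n k)]
  set S := ∑ i ∈ range (N-1), β^i with hSdef
  have hS0 : 0 ≤ S := Finset.sum_nonneg fun i _ => pow_nonneg hβ0 i
  have geomN : ∀ k, M (k+1) ≤ (α * S) * M k := by
    intro k
    apply hMsup
    intro j h1 hjN
    refine le_trans (geom k j hjN) ?_
    have hsub : ∑ i ∈ range (j-1), β^i ≤ S := Finset.sum_le_sum_of_subset_of_nonneg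
      (Finset.range_subset_range.mpr (by omega)) (fun i _ _ => pow_nonneg hβ0 i)
    exact mul_le_mul_of_nonneg_right (mul_le_mul_of_nonneg_left hsub hα) (hM0 k)
  have geomIter : ∀ k, M (k+1) ≤ (α*S)^(k+1) * M 0 := by
    intro k
    induction k with
    | zero => simpa [pow_one] using geomN 0
    | succ k ih =>
      calc M (k+1+1) ≤ (α*S) * M (k+1) := geomN (k+1)
        _ ≤ (α*S) * ((α*S)^(k+1) * M 0) :=
            mul_le_mul_of_nonneg_left ih (mul_nonneg hα hS0)
        _ = (α*S)^(k+1+1) * M 0 := by ring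
  have binom : ∀ k n, n ≤ N → ‖Uf n - U n k‖ ≤ α^k * ((n-1).choose k : ℝ) * M 0 := by
    intro k
    induction k with
    | zero =>
      intro n hn
      simpa using hEM 0 n hn
    | succ k ihk =>
      intro n
      induction n with
      | zero =>
        intro _
        rw [hE0, norm_zero]
        have hc0 : (0-1).choose (k+1) = 0 := Nat.choose_eq_zero_of_lt (by omega)
        rw [hc0]
        simp
      | succ n ihn =>
        intro hn
        have hnN : n < N := hn
        rcases Nat.eq_zero_or_pos n with rfl | hpos
        · rw [hE1 k, norm_zero]
          have hc0 : ((0+1)-1).choose (k+1) = 0 := Nat.choose_eq_zero_of_lt (by omega)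
          rw [hc0]
          simp
        · have h1 := ihn (le_of_lt hnN)
          have h2 := ihk n (le_of_lt hnN)
          have hb := hbound n hnN k
          have e1nn : (0:ℝ) ≤ ‖Uf n - U n (k+1)‖ := norm_nonneg _
          have step1 : β * ‖Uf n - U n (k+1)‖ ≤ ‖Uf n - U n (k+1)‖ := by nlinarith
          have hn' : n - 1 + 1 = n := Nat.succ_pred_eq_of_pos hpos
          have pasc : ((n).choose (k+1) : ℝ)
              = ((n-1).choose (k+1) : ℝ) + ((n-1).choose k : ℝ) := by
            rw [← hn', Nat.choose_succ_succ']
            push_cast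
            ring
          calc ‖Uf (n+1) - U (n+1) (k+1)‖
              ≤ β * ‖Uf n - U n (k+1)‖ + α * ‖Uf n - U n k‖ := hb
            _ ≤ ‖Uf n - U n (k+1)‖ + α * ‖Uf n - U n k‖ := by linarith
            _ ≤ α^(k+1) * ((n-1).choose (k+1) : ℝ) * M 0
                + α * (α^k * ((n-1).choose k : ℝ) * M 0) :=
                add_le_add h1 (mul_le_mul_of_nonneg_left h2 hα)
            _ = α^(k+1) * (((n-1).choose (k+1) : ℝ) + ((n-1).choose k : ℝ)) * M 0 := by
                ring
            _ = α^(k+1) * (((n+1)-1).choose (k+1) : ℝ) * M 0 := by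
                rw [show (n+1)-1 = n from rfl, pasc]
  intro k
  have goal1 : M (k+1) ≤ α^(k+1) * S^(k+1) * M 0 := by
    have hg := geomIter k
    rw [mul_pow] at hg
    exact hg
  have goal2 : M (k+1) ≤ α^(k+1) * (((N-1).choose (k+1) : ℕ) : ℝ) * M 0 := by
    apply hMsup
    intro j h1 hjN
    refine le_trans (binom (k+1) j hjN) ?_
    have hch : ((j-1).choose (k+1) : ℕ) ≤ (N-1).choose (k+1) :=
      Nat.choose_le_choose _ (by omega)
    exact mul_le_mul_of_nonneg_right
      (mul_le_mul_of_nonneg_left (Nat.cast_le.mpr hch) (pow_nonneg hα _)) (hM0 0)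
  have hGS : (1 - β^(N-1)) / (1 - β) = S := by
    rw [hSdef, geom_sum_eq (ne_of_lt hβ1) (N-1)]
    rw [show β^(N-1) - 1 = -(1 - β^(N-1)) by ring, show β - 1 = -(1-β) by ring,
      neg_div_neg_eq]
  show M (k+1) ≤ α^(k+1)
      * min (((1 - β^(N-1))/(1-β))^(k+1)) (((N-1).choose (k+1) : ℕ) : ℝ) * M 0
  rw [hGS]
  rw [mul_min_of_nonneg _ _ (pow_nonneg hα (k+1)), min_mul_of_nonneg _ _ (hM0 0)]
  exact le_min goal1 goal2
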